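/- If an update sequence consists of a single program P_1, then the update answer sets of the sequence coincide exactly with the ordinary answer sets of P_1. -/

import Mathlib

/-- A literal over atoms `α`: an atom or a strongly negated atom. -/
inductive Lit (α : Type) where
  | pos : α → Lit α
  | neg : α → Lit α

/-- The complementary literal. -/
def Lit.compl {α : Type} : Lit α → Lit α
  | .pos a => .neg a
  | .neg a => .pos a

/-- A rule of an extended logic program: optional head literal,
prerequisites `prem`, and weakly negated body literals `nbody`. -/
structure Rule (α : Type) where
  head : Option (Lit α)
  prem : Set (Lit α)
  nbody : Set (Lit α)

/-- A set of literals is consistent iff it contains no complementary pair. -/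
def Consistent {α : Type} (S : Set (Lit α)) : Prop :=
  ∀ a : α, ¬ (Lit.pos a ∈ S ∧ Lit.neg a ∈ S)

/-- The body of `r` is true in `S`. -/
def BodyTrue {α : Type} (S : Set (Lit α)) (r : Rule α) : Prop :=
  r.prem ⊆ S ∧ ∀ L ∈ r.nbody, L ∉ S

/-- The head of `r` is true in `S` (false for constraints). -/
def HeadTrue {α : Type} (S : Set (Lit α)) (r : Rule α) : Prop :=
  ∃ L, r.head = some L ∧ L ∈ S

/-- Rule `r` is true in `S`. -/
def RuleTrue {α : Type} (S : Set (Lit α)) (r : Rule α) : Prop :=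
  BodyTrue S r → HeadTrue S r

/-- `S` is a model of program `P`. -/
def IsModel {α : Type} (S : Set (Lit α)) (P : Set (Rule α)) : Prop :=
  ∀ r ∈ P, RuleTrue S r

/-- `r` is defeated by `S`. -/
def Defeated {α : Type} (S : Set (Lit α)) (r : Rule α) : Prop :=
  ∃ L ∈ r.nbody, L ∈ S

/-- The Gelfond–Lifschitz reduct of `P` relative to `S`. -/
def Reduct {α : Type} (P : Set (Rule α)) (S : Set (Lit α)) : Set (Rule α) :=
  { r' | ∃ r ∈ P, ¬ Defeated S r ∧ r' = Rule.mk r.head r.prem ∅ }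

/-- `S` is an answer set of `P`: a consistent set of literals that is a
minimal model of the reduct `P^S`. -/
def IsAnswerSet {α : Type} (P : Set (Rule α)) (S : Set (Lit α)) : Prop :=
  Consistent S ∧ IsModel S (Reduct P S) ∧
    ∀ T ⊆ S, IsModel T (Reduct P S) → T = S

/-- The belief set of `P`: all rules true in every answer set of `P`. -/
def Bel {α : Type} (P : Set (Rule α)) : Set (Rule α) :=
  { r | ∀ S, IsAnswerSet P S → RuleTrue S r }
/-- Extended alphabet `At*`: original atoms, indexed copies `A_i`,
and rejection atoms `rej(r)` for (named copies of) rules. -/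
inductive ExtAtom (α : Type) where
  | base : α → ExtAtom α
  | idx : ℕ → α → ExtAtom α
  | rej : ℕ → Rule α → ExtAtom α

/-- Lift a literal over `α` to the corresponding literal over `At*`. -/
def liftLit {α : Type} : Lit α → Lit (ExtAtom α)
  | .pos a => .pos (.base a)
  | .neg a => .neg (.base a)

/-- The indexed copy `L_i` of a literal `L`. -/
def idxLit {α : Type} (i : ℕ) : Lit α → Lit (ExtAtom α)
  | .pos a => .pos (.idx i a)
  | .neg a => .neg (.idx i a)

/-- Literal `L` occurs in the update sequence `(P 0, …, P (n-1))`. -/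
def OccursIn {α : Type} (n : ℕ) (P : ℕ → Set (Rule α)) (L : Lit α) : Prop :=
  ∃ i < n, ∃ r ∈ P i, r.head = some L ∨ L ∈ r.prem ∨ L ∈ r.nbody

/-- The update program `P_◁` of the update sequence `(P 0, …, P (n-1))`,
an ELP over the extended alphabet `At*`. -/
def UpdProgram {α : Type} (n : ℕ) (P : ℕ → Set (Rule α)) : Set (Rule (ExtAtom α)) :=
  -- (i) all constraints
  { r' | ∃ i < n, ∃ r ∈ P i, r.head = none ∧
      r' = Rule.mk none (liftLit '' r.prem) (liftLit '' r.nbody) } ∪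
  -- (ii)  L_i ← B(r), not rej(r)
  { r' | ∃ i < n, ∃ r ∈ P i, ∃ L, r.head = some L ∧
      r' = Rule.mk (some (idxLit i L)) (liftLit '' r.prem)
             ((liftLit '' r.nbody) ∪ {Lit.pos (ExtAtom.rej i r)}) } ∪
  -- (iii)  rej(r) ← B(r), ¬L_{i+1}
  { r' | ∃ i, i + 1 < n ∧ ∃ r ∈ P i, ∃ L, r.head = some L ∧
      r' = Rule.mk (some (Lit.pos (ExtAtom.rej i r)))
             ((liftLit '' r.prem) ∪ {idxLit (i+1) L.compl}) (liftLit '' r.nbody) } ∪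
  -- (iv) inertia rules  L_i ← L_{i+1}  and  L ← L_1
  { r' | ∃ L, OccursIn n P L ∧
      ((∃ i, i + 1 < n ∧ r' = Rule.mk (some (idxLit i L)) {idxLit (i+1) L} ∅) ∨
        r' = Rule.mk (some (liftLit L)) {idxLit 0 L} ∅) }

/-- `S` is an update answer set of the sequence `(P 0, …, P (n-1))`:
the restriction to `Lit_At` of an answer set of the update program. -/
def UpdateAnswerSet {α : Type} (n : ℕ) (P : ℕ → Set (Rule α)) (S : Set (Lit α)) : Prop :=
  ∃ S' : Set (Lit (ExtAtom α)), IsAnswerSet (UpdProgram n P) S' ∧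
    S = { L | liftLit L ∈ S' }

/-- Two rules are conflicting iff their heads are complementary literals. -/
def Conflicting {α : Type} (r r' : Rule α) : Prop :=
  ∃ L, r.head = some L ∧ r'.head = some L.compl

/-- The founded rejection set at level `i`: rules of `P i` rejected by a
conflicting, itself non-rejected rule of some later program. -/
def RejLevel {α : Type} (n : ℕ) (P : ℕ → Set (Rule α)) (S : Set (Lit α)) (i : ℕ) :
    Set (Rule α) :=
  { r | r ∈ P i ∧ ∃ j, ∃ _ : i < j, ∃ _ : j < n, ∃ r',
      r' ∈ P j ∧ r' ∉ RejLevel n P S j ∧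
      Conflicting r r' ∧ BodyTrue S r ∧ BodyTrue S r' }
  termination_by n - i
  decreasing_by omega

/-- The founded rejection set `Rej(S, P⃗)`. -/
def Rej {α : Type} (n : ℕ) (P : ℕ → Set (Rule α)) (S : Set (Lit α)) : Set (Rule α) :=
  { r | ∃ i < n, r ∈ RejLevel n P S i }

/-- The union `∪P⃗` of all rules of the sequence. -/
def UnionSeq {α : Type} (n : ℕ) (P : ℕ → Set (Rule α)) : Set (Rule α) :=
  { r | ∃ i < n, r ∈ P i }


section Aux
variable {α : Type}

lemma liftLit_inj {L M : Lit α} (h : liftLit L = liftLit M) : L = M := by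
  cases L <;> cases M <;> simp [liftLit] at h <;> simp [h]

lemma idxLit_inj {i : ℕ} {L M : Lit α} (h : idxLit i L = idxLit i M) : L = M := by
  cases L <;> cases M <;> simp [idxLit] at h <;> simp [h]

lemma liftLit_ne_idxLit {L M : Lit α} {i : ℕ} : liftLit L ≠ idxLit i M := by
  cases L <;> cases M <;> simp [liftLit, idxLit]

lemma liftLit_ne_rej {L : Lit α} {i : ℕ} {r : Rule α} :
    liftLit L ≠ Lit.pos (ExtAtom.rej i r) ∧ liftLit L ≠ Lit.neg (ExtAtom.rej i r) := by
  cases L <;> simp [liftLit]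

lemma idxLit_ne_rej {L : Lit α} {i j : ℕ} {r : Rule α} :
    idxLit i L ≠ Lit.pos (ExtAtom.rej j r) ∧ idxLit i L ≠ Lit.neg (ExtAtom.rej j r) := by
  cases L <;> simp [idxLit]

lemma mem_lift_image {s : Set (Lit α)} {L : Lit α} :
    liftLit L ∈ liftLit '' s ↔ L ∈ s := by
  constructor
  · rintro ⟨M, hM, e⟩; rwa [← liftLit_inj e]
  · intro h; exact ⟨L, h, rfl⟩

/-- Characterization of membership in the one-step update program. -/
lemma mem_upd_one {P : ℕ → Set (Rule α)} {r' : Rule (ExtAtom α)} :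
    r' ∈ UpdProgram 1 P ↔
      (∃ r ∈ P 0, r.head = none ∧
        r' = Rule.mk none (liftLit '' r.prem) (liftLit '' r.nbody)) ∨
      (∃ r ∈ P 0, ∃ L, r.head = some L ∧
        r' = Rule.mk (some (idxLit 0 L)) (liftLit '' r.prem)
              ((liftLit '' r.nbody) ∪ {Lit.pos (ExtAtom.rej 0 r)})) ∨
      (∃ L, OccursIn 1 P L ∧ r' = Rule.mk (some (liftLit L)) {idxLit 0 L} ∅) := by
  constructor
  · rintro (((⟨i, hi, h⟩ | ⟨i, hi, h⟩) | ⟨i, hi, h⟩) | ⟨L, hL, (⟨i, hi, h⟩ | h)⟩)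
    · exact Or.inl (by interval_cases i; exact h)
    · exact Or.inr (Or.inl (by interval_cases i; exact h))
    · omega
    · omega
    · exact Or.inr (Or.inr ⟨L, hL, h⟩)
  · rintro (h | h | ⟨L, hL, h⟩)
    · exact Or.inl (Or.inl (Or.inl ⟨0, one_pos, h⟩))
    · exact Or.inl (Or.inl (Or.inr ⟨0, one_pos, h⟩))
    · exact Or.inr ⟨L, hL, Or.inr h⟩

lemma mem_reduct {Q : Set (Rule α)} {S : Set (Lit α)} {r' : Rule α} :
    r' ∈ Reduct Q S ↔ ∃ r ∈ Q, ¬ Defeated S r ∧ r' = Rule.mk r.head r.prem ∅ :=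
  Iff.rfl


/-- The canonical extension of `S` to the extended alphabet (one-step case). -/
def emb (P0 : Set (Rule α)) (S : Set (Lit α)) : Set (Lit (ExtAtom α)) :=
  liftLit '' S ∪
    { M | ∃ L ∈ S, M = idxLit 0 L ∧ ∃ r ∈ P0, r.head = some L ∧ BodyTrue S r }

lemma emb_cases {P0 : Set (Rule α)} {S : Set (Lit α)} {M : Lit (ExtAtom α)}
    (h : M ∈ emb P0 S) :
    (∃ L ∈ S, M = liftLit L) ∨
      (∃ L ∈ S, M = idxLit 0 L ∧ ∃ r ∈ P0, r.head = some L ∧ BodyTrue S r) := by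
  rcases h with ⟨L, hL, e⟩ | ⟨L, hL, e, hr⟩
  · exact Or.inl ⟨L, hL, e.symm⟩
  · exact Or.inr ⟨L, hL, e, hr⟩

lemma emb_lift_mem {P0 : Set (Rule α)} {S : Set (Lit α)} {L : Lit α} :
    liftLit L ∈ emb P0 S ↔ L ∈ S := by
  constructor
  · intro h
    rcases emb_cases h with ⟨L', hL', e⟩ | ⟨L', _, e, _⟩
    · rwa [liftLit_inj e]
    · exact absurd e liftLit_ne_idxLit
  · intro h; exact Or.inl ⟨L, h, rfl⟩

lemma emb_idx_mem {P0 : Set (Rule α)} {S : Set (Lit α)} {L : Lit α} :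
    idxLit 0 L ∈ emb P0 S ↔
      (L ∈ S ∧ ∃ r ∈ P0, r.head = some L ∧ BodyTrue S r) := by
  constructor
  · intro h
    rcases emb_cases h with ⟨L', _, e⟩ | ⟨L', hL', e, hr⟩
    · exact absurd e.symm liftLit_ne_idxLit
    · rcases idxLit_inj e with rfl; exact ⟨hL', hr⟩
  · rintro ⟨hL, hr⟩; exact Or.inr ⟨L, hL, rfl, hr⟩

lemma emb_no_rej {P0 : Set (Rule α)} {S : Set (Lit α)} {i : ℕ} {r : Rule α} :
    Lit.pos (ExtAtom.rej i r) ∉ emb P0 S := by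
  intro h
  rcases emb_cases h with ⟨L, _, e⟩ | ⟨L, _, e, _⟩
  · exact liftLit_ne_rej.1 e.symm
  · exact idxLit_ne_rej.1 e.symm

end Aux


section Main
variable {α : Type}

lemma occurs_of_head {P : ℕ → Set (Rule α)} {r : Rule α} {L : Lit α}
    (hr : r ∈ P 0) (hh : r.head = some L) : OccursIn 1 P L :=
  ⟨0, one_pos, r, hr, Or.inl hh⟩

lemma emptyNbody {β : Type} (S : Set (Lit β)) : ∀ L ∈ (∅ : Set (Lit β)), L ∉ S :=
  fun L hL => absurd hL (Set.notMem_empty L)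

lemma single_back {P : ℕ → Set (Rule α)} {S : Set (Lit α)}
    (hS : IsAnswerSet (P 0) S) : UpdateAnswerSet 1 P S := by
  obtain ⟨hCons, hMod, hMin⟩ := hS
  refine ⟨emb (P 0) S, ⟨?_, ?_, ?_⟩, ?_⟩
  · -- consistency
    intro a ⟨h1, h2⟩
    cases a with
    | base b =>
        exact hCons b ⟨emb_lift_mem.mp (show liftLit (Lit.pos b) ∈ _ from h1),
          emb_lift_mem.mp (show liftLit (Lit.neg b) ∈ _ from h2)⟩
    | idx i b =>
        have g1 := emb_cases h1
        have g2 := emb_cases h2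
        have p1 : Lit.pos b ∈ S := by
          rcases g1 with ⟨L, hL, e⟩ | ⟨L, hL, e, -⟩
          · cases L <;> simp [liftLit] at e
          · cases L <;> simp [idxLit] at e
            · rcases e with ⟨rfl, rfl⟩; exact hL
        have p2 : Lit.neg b ∈ S := by
          rcases g2 with ⟨L, hL, e⟩ | ⟨L, hL, e, -⟩
          · cases L <;> simp [liftLit] at e
          · cases L <;> simp [idxLit] at e
            · rcases e with ⟨rfl, rfl⟩; exact hL
        exact hCons b ⟨p1, p2⟩
    | rej i r => exact emb_no_rej h1
  · -- model of the reduct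
    rintro r'' ⟨r', hr', hnd, rfl⟩
    rw [mem_upd_one] at hr'
    rcases hr' with ⟨r, hrP, hh, rfl⟩ | ⟨r, hrP, L, hh, rfl⟩ | ⟨L, hocc, rfl⟩
    · -- constraints
      rintro ⟨hprem, -⟩
      exfalso
      have hpS : r.prem ⊆ S := fun L hL => emb_lift_mem.mp (hprem ⟨L, hL, rfl⟩)
      have hndS : ¬ Defeated S r := by
        rintro ⟨L, hL, hLS⟩
        exact hnd ⟨liftLit L, ⟨L, hL, rfl⟩, emb_lift_mem.mpr hLS⟩
      have := hMod _ ⟨r, hrP, hndS, rfl⟩ ⟨hpS, emptyNbody S⟩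
      rcases this with ⟨L, e, -⟩
      rw [hh] at e; exact (Option.some_ne_none _ e.symm).elim
    · -- rules (ii)
      rintro ⟨hprem, -⟩
      have hpS : r.prem ⊆ S := fun M hM => emb_lift_mem.mp (hprem ⟨M, hM, rfl⟩)
      have hbtS : BodyTrue S r := by
        refine ⟨hpS, fun M hM hMS => ?_⟩
        exact hnd ⟨liftLit M, Or.inl ⟨M, hM, rfl⟩, emb_lift_mem.mpr hMS⟩
      have hndS : ¬ Defeated S r := fun ⟨M, hM, hMS⟩ => hbtS.2 M hM hMS
      have hLS : L ∈ S := by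
        rcases hMod _ ⟨r, hrP, hndS, rfl⟩ ⟨hpS, emptyNbody S⟩ with ⟨L', e, hL'⟩
        rw [hh] at e; cases Option.some.inj e; exact hL'
      exact ⟨idxLit 0 L, rfl, emb_idx_mem.mpr ⟨hLS, r, hrP, hh, hbtS⟩⟩
    · -- inertia
      rintro ⟨hprem, -⟩
      have hidx : idxLit 0 L ∈ emb (P 0) S := hprem rfl
      exact ⟨liftLit L, rfl, emb_lift_mem.mpr (emb_idx_mem.mp hidx).1⟩
  · -- minimality
    intro T hTsub hTmod
    set T0 : Set (Lit α) := {L | liftLit L ∈ T} with hT0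
    have hT0S : T0 ⊆ S := fun L hL => emb_lift_mem.mp (hTsub hL)
    have hT0mod : IsModel T0 (Reduct (P 0) S) := by
      rintro r'' ⟨r, hrP, hnd, rfl⟩
      rintro ⟨hprem, -⟩
      have hliftprem : liftLit '' r.prem ⊆ T := by
        rintro M ⟨L, hL, rfl⟩; exact hprem hL
      rcases hh : r.head with _ | L
      · exfalso
        have hrule : Rule.mk none (liftLit '' r.prem) (liftLit '' r.nbody)
            ∈ UpdProgram 1 P := mem_upd_one.mpr (Or.inl ⟨r, hrP, hh, rfl⟩)
        have hnd' : ¬ Defeated (emb (P 0) S)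
            (Rule.mk none (liftLit '' r.prem) (liftLit '' r.nbody)) := by
          rintro ⟨M, ⟨L, hL, rfl⟩, hMS⟩
          exact hnd ⟨L, hL, emb_lift_mem.mp hMS⟩
        rcases hTmod _ ⟨_, hrule, hnd', rfl⟩ ⟨hliftprem, emptyNbody T⟩ with ⟨L, e, -⟩
        exact (Option.some_ne_none _ e.symm).elim
      · have hrule : Rule.mk (some (idxLit 0 L)) (liftLit '' r.prem)
            ((liftLit '' r.nbody) ∪ {Lit.pos (ExtAtom.rej 0 r)})
            ∈ UpdProgram 1 P := mem_upd_one.mpr (Or.inr (Or.inl ⟨r, hrP, L, hh, rfl⟩))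
        have hnd' : ¬ Defeated (emb (P 0) S)
            (Rule.mk (some (idxLit 0 L)) (liftLit '' r.prem)
              ((liftLit '' r.nbody) ∪ {Lit.pos (ExtAtom.rej 0 r)})) := by
          rintro ⟨M, hM, hMS⟩
          rcases hM with ⟨L', hL', rfl⟩ | hM
          · exact hnd ⟨L', hL', emb_lift_mem.mp hMS⟩
          · rcases hM with rfl; exact emb_no_rej hMS
        have hidxT : idxLit 0 L ∈ T := by
          rcases hTmod _ ⟨_, hrule, hnd', rfl⟩ ⟨hliftprem, emptyNbody T⟩ with ⟨M, e, hM⟩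
          cases Option.some.inj e; exact hM
        have hinertia : Rule.mk (some (liftLit L)) ({idxLit 0 L} : Set _) ∅
            ∈ UpdProgram 1 P :=
          mem_upd_one.mpr (Or.inr (Or.inr ⟨L, occurs_of_head hrP hh, rfl⟩))
        have hnd2 : ¬ Defeated (emb (P 0) S)
            (Rule.mk (some (liftLit L)) ({idxLit 0 L} : Set _) ∅) := by
          rintro ⟨M, hM, -⟩; exact Set.notMem_empty M hM
        have hliftT : liftLit L ∈ T := by
          rcases hTmod _ ⟨_, hinertia, hnd2, rfl⟩
            ⟨fun M hM => by rcases hM with rfl; exact hidxT, emptyNbody T⟩ with ⟨M, e, hM⟩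
          cases Option.some.inj e; exact hM
        exact ⟨L, rfl, hliftT⟩
    have hT0eq : T0 = S := hMin T0 hT0S hT0mod
    apply Set.Subset.antisymm hTsub
    intro M hM
    rcases emb_cases hM with ⟨L, hLS, rfl⟩ | ⟨L, hLS, rfl, r, hrP, hh, hbtS⟩
    · rw [← hT0eq] at hLS; exact hLS
    · have hrule : Rule.mk (some (idxLit 0 L)) (liftLit '' r.prem)
          ((liftLit '' r.nbody) ∪ {Lit.pos (ExtAtom.rej 0 r)})
          ∈ UpdProgram 1 P := mem_upd_one.mpr (Or.inr (Or.inl ⟨r, hrP, L, hh, rfl⟩))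
      have hnd' : ¬ Defeated (emb (P 0) S)
          (Rule.mk (some (idxLit 0 L)) (liftLit '' r.prem)
            ((liftLit '' r.nbody) ∪ {Lit.pos (ExtAtom.rej 0 r)})) := by
        rintro ⟨M, hM, hMS⟩
        rcases hM with ⟨L', hL', rfl⟩ | hM
        · exact hbtS.2 L' hL' (emb_lift_mem.mp hMS)
        · rcases hM with rfl; exact emb_no_rej hMS
      have hliftprem : liftLit '' r.prem ⊆ T := by
        rintro M ⟨L', hL', rfl⟩
        have : L' ∈ T0 := hT0eq ▸ hbtS.1 hL'
        exact this
      rcases hTmod _ ⟨_, hrule, hnd', rfl⟩ ⟨hliftprem, emptyNbody T⟩ with ⟨M, e, hM⟩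
      cases Option.some.inj e; exact hM
  · ext L
    exact (emb_lift_mem (P0 := P 0) (S := S)).symm

end Main


section Forward
variable {α : Type}

/-- Every literal of an answer set of the one-step update program is a lifted
or an indexed literal (in particular no `rej` literal occurs). -/
lemma answer_shape {P : ℕ → Set (Rule α)} {S' : Set (Lit (ExtAtom α))}
    (h : IsAnswerSet (UpdProgram 1 P) S') :
    ∀ M ∈ S', (∃ L, M = liftLit L) ∨ (∃ L, M = idxLit 0 L) := by
  obtain ⟨hCons, hMod, hMin⟩ := h
  set T : Set (Lit (ExtAtom α)) :=
    {M ∈ S' | (∃ L, M = liftLit L) ∨ (∃ L, M = idxLit 0 L)} with hTdef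
  have hTsub : T ⊆ S' := fun M hM => hM.1
  have hTmod : IsModel T (Reduct (UpdProgram 1 P) S') := by
    rintro r'' ⟨r', hr', hnd, rfl⟩ ⟨hprem, -⟩
    have hpS' : r'.prem ⊆ S' := fun M hM => (hprem hM).1
    rcases hMod _ ⟨r', hr', hnd, rfl⟩ ⟨hpS', emptyNbody S'⟩ with ⟨L, e, hLS'⟩
    refine ⟨L, e, hLS', ?_⟩
    rcases mem_upd_one.mp hr' with ⟨r, _, hh, rfl⟩ | ⟨r, _, L0, hh, rfl⟩ | ⟨L0, _, rfl⟩
    · exact (Option.some_ne_none _ e.symm).elim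
    · exact Or.inr ⟨L0, (Option.some.inj e).symm⟩
    · exact Or.inl ⟨L0, (Option.some.inj e).symm⟩
  have hTeq : T = S' := hMin T hTsub hTmod
  intro M hM
  rw [← hTeq] at hM
  exact hM.2

lemma single_forward {P : ℕ → Set (Rule α)} {S' : Set (Lit (ExtAtom α))}
    (h : IsAnswerSet (UpdProgram 1 P) S') :
    IsAnswerSet (P 0) {L | liftLit L ∈ S'} := by
  have hshape := answer_shape h
  obtain ⟨hCons, hMod, hMin⟩ := h
  set S : Set (Lit α) := {L | liftLit L ∈ S'} with hSdef
  have hnoRej : ∀ (i : ℕ) (r : Rule α), Lit.pos (ExtAtom.rej i r) ∉ S' := by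
    intro i r hmem
    rcases hshape _ hmem with ⟨L, e⟩ | ⟨L, e⟩
    · exact liftLit_ne_rej.1 e.symm
    · exact idxLit_ne_rej.1 e.symm
  refine ⟨?_, ?_, ?_⟩
  · -- consistency
    intro a ⟨h1, h2⟩
    exact hCons (ExtAtom.base a) ⟨h1, h2⟩
  · -- model
    rintro r'' ⟨r, hrP, hnd, rfl⟩ ⟨hprem, -⟩
    have hliftprem : liftLit '' r.prem ⊆ S' := by
      rintro M ⟨L, hL, rfl⟩; exact hprem hL
    rcases hh : r.head with _ | L
    · exfalso
      have hrule : Rule.mk none (liftLit '' r.prem) (liftLit '' r.nbody)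
          ∈ UpdProgram 1 P := mem_upd_one.mpr (Or.inl ⟨r, hrP, hh, rfl⟩)
      have hnd' : ¬ Defeated S'
          (Rule.mk none (liftLit '' r.prem) (liftLit '' r.nbody)) := by
        rintro ⟨M, ⟨L, hL, rfl⟩, hMS⟩
        exact hnd ⟨L, hL, hMS⟩
      rcases hMod _ ⟨_, hrule, hnd', rfl⟩ ⟨hliftprem, emptyNbody S'⟩ with ⟨L, e, -⟩
      exact (Option.some_ne_none _ e.symm).elim
    · have hrule : Rule.mk (some (idxLit 0 L)) (liftLit '' r.prem)
          ((liftLit '' r.nbody) ∪ {Lit.pos (ExtAtom.rej 0 r)})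
          ∈ UpdProgram 1 P := mem_upd_one.mpr (Or.inr (Or.inl ⟨r, hrP, L, hh, rfl⟩))
      have hnd' : ¬ Defeated S'
          (Rule.mk (some (idxLit 0 L)) (liftLit '' r.prem)
            ((liftLit '' r.nbody) ∪ {Lit.pos (ExtAtom.rej 0 r)})) := by
        rintro ⟨M, hM, hMS⟩
        rcases hM with ⟨L', hL', rfl⟩ | hM
        · exact hnd ⟨L', hL', hMS⟩
        · rcases hM with rfl; exact hnoRej 0 r hMS
      have hidx : idxLit 0 L ∈ S' := by
        rcases hMod _ ⟨_, hrule, hnd', rfl⟩ ⟨hliftprem, emptyNbody S'⟩ with ⟨M, e, hM⟩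
        cases Option.some.inj e; exact hM
      have hinertia : Rule.mk (some (liftLit L)) ({idxLit 0 L} : Set _) ∅
          ∈ UpdProgram 1 P :=
        mem_upd_one.mpr (Or.inr (Or.inr ⟨L, occurs_of_head hrP hh, rfl⟩))
      have hnd2 : ¬ Defeated S'
          (Rule.mk (some (liftLit L)) ({idxLit 0 L} : Set _) ∅) := by
        rintro ⟨M, hM, -⟩; exact Set.notMem_empty M hM
      have hlift : liftLit L ∈ S' := by
        rcases hMod _ ⟨_, hinertia, hnd2, rfl⟩
          ⟨fun M hM => by rcases hM with rfl; exact hidx, emptyNbody S'⟩ with ⟨M, e, hM⟩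
        cases Option.some.inj e; exact hM
      exact ⟨L, rfl, hlift⟩
  · -- minimality
    intro T hTS hTmod
    set T' : Set (Lit (ExtAtom α)) :=
      (liftLit '' T) ∪
        { M | ∃ L, M = idxLit 0 L ∧ idxLit 0 L ∈ S' ∧
            ∃ r ∈ P 0, r.head = some L ∧ ¬ Defeated S r ∧ r.prem ⊆ T } with hT'def
    have hT'sub : T' ⊆ S' := by
      rintro M (⟨L, hL, rfl⟩ | ⟨L, rfl, hS'2, -⟩)
      · exact hTS hL
      · exact hS'2
    have liftT'_elim : ∀ {L : Lit α}, liftLit L ∈ T' → L ∈ T := by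
      rintro L (⟨L', hL', e⟩ | ⟨L', e, -⟩)
      · cases liftLit_inj e; exact hL'
      · exact absurd e liftLit_ne_idxLit
    have hT'mod : IsModel T' (Reduct (UpdProgram 1 P) S') := by
      rintro r'' ⟨r', hr', hnd, rfl⟩ ⟨hprem, -⟩
      rcases mem_upd_one.mp hr' with ⟨r, hrP, hh, rfl⟩ | ⟨r, hrP, L, hh, rfl⟩ |
        ⟨L, hocc, rfl⟩
      · exfalso
        have hpT : r.prem ⊆ T := fun L hL => liftT'_elim (hprem ⟨L, hL, rfl⟩)
        have hndS : ¬ Defeated S r := by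
          rintro ⟨M, hM, hMS⟩; exact hnd ⟨liftLit M, ⟨M, hM, rfl⟩, hMS⟩
        rcases hTmod _ ⟨r, hrP, hndS, rfl⟩ ⟨hpT, emptyNbody T⟩ with ⟨L, e, -⟩
        rw [hh] at e; exact (Option.some_ne_none _ e.symm).elim
      · have hpT : r.prem ⊆ T := fun M hM => liftT'_elim (hprem ⟨M, hM, rfl⟩)
        have hndS : ¬ Defeated S r := by
          rintro ⟨M, hM, hMS⟩; exact hnd ⟨liftLit M, Or.inl ⟨M, hM, rfl⟩, hMS⟩
        have hidxS' : idxLit 0 L ∈ S' := by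
          rcases hMod _ ⟨_, hr', hnd, rfl⟩
            ⟨fun M hM => hT'sub (hprem hM), emptyNbody S'⟩ with ⟨M, e, hM⟩
          cases Option.some.inj e; exact hM
        exact ⟨idxLit 0 L, rfl, Or.inr ⟨L, rfl, hidxS', r, hrP, hh, hndS, hpT⟩⟩
      · have hidx : idxLit 0 L ∈ T' := hprem rfl
        rcases hidx with ⟨L', hL', e⟩ | ⟨L', e, hS'2, r, hrP, hh, hndS, hpT⟩
        · exact absurd e liftLit_ne_idxLit
        · cases idxLit_inj e
          rcases hTmod _ ⟨r, hrP, hndS, rfl⟩ ⟨hpT, emptyNbody T⟩ with ⟨M, e2, hM⟩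
          rw [hh] at e2; cases Option.some.inj e2
          exact ⟨liftLit L, rfl, Or.inl ⟨L, hM, rfl⟩⟩
    have hT'eq : T' = S' := hMin T' hT'sub hT'mod
    apply Set.Subset.antisymm hTS
    intro L hL
    have hmem : liftLit L ∈ S' := hL
    rw [← hT'eq] at hmem
    exact liftT'_elim hmem

end Forward

/-- for a single-program update sequence, update answer sets
coincide with ordinary answer sets. -/
theorem updateAnswerSet_single {α : Type} (P : ℕ → Set (Rule α)) (S : Set (Lit α)) :
    UpdateAnswerSet 1 P S ↔ IsAnswerSet (P 0) S := by
  constructor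
  · rintro ⟨S', hS', rfl⟩
    exact single_forward hS'
  · exact single_back
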